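/- First-order optimality condition for the alignment distance. Let Z, Z⋆ ∈ ℂ^{n_s×r}, and suppose P ∈ ℂ^{r×r} is invertible and minimizes g(P′) := ‖Z − Z⋆P′‖_F² + ‖Z − Z⋆(P′)^{−T}‖_F² over all invertible P′ ∈ ℂ^{r×r} (i.e. g(P) ≤ g(P′) for every invertible P′). Then (Z⋆P)ᴴ·(Z − Z⋆P) = (Z − Z⋆P^{−T})ᵀ·conj(Z⋆P^{−T}). -/

import Mathlib

open Matrix
open scoped BigOperators

noncomputable section

/-- Frobenius norm of a complex matrix. -/
def frobNorm {m n : ℕ} (A : Matrix (Fin m) (Fin n) ℂ) : ℝ :=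
  Real.sqrt (∑ i, ∑ j, ‖A i j‖ ^ 2)

/-- Entrywise complex conjugate of a matrix. -/
def conjM {m n : ℕ} (A : Matrix (Fin m) (Fin n) ℂ) : Matrix (Fin m) (Fin n) ℂ :=
  A.map (starRingEnd ℂ)

section Aux

attribute [local instance] Matrix.linftyOpNormedRing Matrix.linftyOpNormedAlgebra

private lemma frobNorm_sq {m n : ℕ} (A : Matrix (Fin m) (Fin n) ℂ) :
    frobNorm A ^ 2 = ∑ i, ∑ j, Complex.normSq (A i j) := by
  rw [frobNorm, Real.sq_sqrt (by positivity)]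
  simp [Complex.sq_norm]

private lemma hasDerivAt_normSq {f : ℝ → ℂ} {f' : ℂ} {x : ℝ}
    (hf : HasDerivAt f f' x) :
    HasDerivAt (fun t => Complex.normSq (f t))
      (2 * ((starRingEnd ℂ) (f x) * f').re) x := by
  have hre : HasDerivAt (fun t => (f t).re) f'.re x :=
    Complex.reCLM.hasFDerivAt.comp_hasDerivAt x hf
  have him : HasDerivAt (fun t => (f t).im) f'.im x :=
    Complex.imCLM.hasFDerivAt.comp_hasDerivAt x hf
  have h2 := (hre.fun_mul hre).fun_add (him.fun_mul him)
  have hfun : (fun t => Complex.normSq (f t))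
      = fun t => (f t).re * (f t).re + (f t).im * (f t).im := by
    funext t; simp [Complex.normSq_apply]
  rw [hfun]
  refine h2.congr_deriv ?_
  simp [Complex.mul_re, Complex.conj_re, Complex.conj_im]
  ring

private lemma trace_form {m n : ℕ} (A B : Matrix (Fin m) (Fin n) ℂ) :
    Matrix.trace (Aᴴ * B) = ∑ i, ∑ j, (starRingEnd ℂ) (A i j) * B i j := by
  rw [Matrix.trace]
  simp only [Matrix.diag, Matrix.mul_apply, Matrix.conjTranspose_apply]
  rw [Finset.sum_comm]; rfl

private lemma trace_stdBasisMatrix_mul {r : ℕ} (p q : Fin r) (A : Matrix (Fin r) (Fin r) ℂ) :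
    Matrix.trace (Matrix.single p q 1 * A) = A q p := by
  rw [Matrix.trace]
  rw [Finset.sum_eq_single p]
  · simp
  · intro i _ hi
    simp [Matrix.single_mul_apply_of_ne (h := hi)]
  · simp

end Aux

section Main

attribute [local instance] Matrix.linftyOpNormedRing Matrix.linftyOpNormedAlgebra

variable {ns r : ℕ}

set_option maxHeartbeats 1000000 in
private lemma stationarity_re
    (Z Zs : Matrix (Fin ns) (Fin r) ℂ)
    (P : Matrix (Fin r) (Fin r) ℂ) (hP : IsUnit P)
    (hmin : ∀ P' : Matrix (Fin r) (Fin r) ℂ, IsUnit P' →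
      frobNorm (Z - Zs * P) ^ 2 + frobNorm (Z - Zs * (P⁻¹)ᵀ) ^ 2
        ≤ frobNorm (Z - Zs * P') ^ 2 + frobNorm (Z - Zs * (P'⁻¹)ᵀ) ^ 2)
    (E : Matrix (Fin r) (Fin r) ℂ) :
    (∑ i, ∑ j, 2 * ((starRingEnd ℂ) ((Z - Zs * P) i j) * (Zs * E) i j).re)
      = ∑ i, ∑ j, 2 * ((starRingEnd ℂ) ((Z - Zs * (P⁻¹)ᵀ) i j)
          * (Zs * (P⁻¹ * E * P⁻¹)ᵀ) i j).re := by
  -- the path and its inverse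
  have hpath : HasDerivAt (fun t : ℝ => P + t • E) E 0 := by
    exact (((hasDerivAt_id (0 : ℝ)).smul_const E).const_add P).congr_deriv (one_smul _ _)
  have h0 : P + (0 : ℝ) • E = (hP.unit : Matrix (Fin r) (Fin r) ℂ) := by
    simp [hP.unit_spec]
  have hc : HasDerivAt (fun t : ℝ => Ring.inverse (P + t • E)) (-(P⁻¹ * E * P⁻¹)) 0 := by
    have h := (h0 ▸ (hasFDerivAt_ringInverse (𝕜 := ℝ) hP.unit) :
        HasFDerivAt Ring.inverse
          (-(ContinuousLinearMap.mulLeftRight ℝ (Matrix (Fin r) (Fin r) ℂ)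
              (↑hP.unit⁻¹) (↑hP.unit⁻¹))) (P + (0 : ℝ) • E)).comp_hasDerivAt 0 hpath
    have hinv : ((hP.unit⁻¹ : (Matrix (Fin r) (Fin r) ℂ)ˣ) : Matrix (Fin r) (Fin r) ℂ)
        = P⁻¹ := by
      simp [Matrix.nonsing_inv_eq_ringInverse]
    rw [hinv] at h
    exact h
  -- entrywise derivative of the inverse path
  have hcent : ∀ j k : Fin r, HasDerivAt (fun t : ℝ => Ring.inverse (P + t • E) j k)
      ((-(P⁻¹ * E * P⁻¹)) j k) 0 := by
    intro j k
    have := ((Matrix.entryLinearMap ℝ ℂ j k).toContinuousLinearMap.hasFDerivAt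
        (x := Ring.inverse (P + (0:ℝ) • E))).comp_hasDerivAt 0 hc
    exact this
  -- derivative of the first family of entries
  have h1 : ∀ (i : Fin ns) (j : Fin r),
      HasDerivAt (fun t : ℝ => Complex.normSq ((Z - Zs * (P + t • E)) i j))
        (-(2 * ((starRingEnd ℂ) ((Z - Zs * P) i j) * ((Zs * E) i j)).re)) 0 := by
    intro i j
    have hf : HasDerivAt (fun t : ℝ => (Z - Zs * (P + t • E)) i j) (-((Zs * E) i j)) 0 := by
      have heq : (fun t : ℝ => (Z - Zs * (P + t • E)) i j)
          = fun t : ℝ => (Z - Zs * P) i j - (t : ℂ) * (Zs * E) i j := by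
        funext t
        simp [Matrix.mul_add, Matrix.mul_smul, Matrix.sub_apply, Matrix.add_apply,
          Matrix.smul_apply, Complex.real_smul]
        ring
      rw [heq]
      simpa using
        (((Complex.ofRealCLM.hasDerivAt (x := (0:ℝ))).mul_const ((Zs * E) i j)).const_sub
          ((Z - Zs * P) i j))
    have h := hasDerivAt_normSq hf
    have h00 : (Z - Zs * (P + (0:ℝ) • E)) i j = (Z - Zs * P) i j := by simp
    rw [h00] at h
    convert h using 1
    simp only [mul_neg, Complex.neg_re, neg_neg]
  -- derivative of the second family of entries
  have h2 : ∀ (i : Fin ns) (j : Fin r),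
      HasDerivAt (fun t : ℝ => Complex.normSq ((Z - Zs * (Ring.inverse (P + t • E))ᵀ) i j))
        (2 * ((starRingEnd ℂ) ((Z - Zs * (P⁻¹)ᵀ) i j)
            * ((Zs * (P⁻¹ * E * P⁻¹)ᵀ) i j)).re) 0 := by
    intro i j
    have hf : HasDerivAt (fun t : ℝ => (Z - Zs * (Ring.inverse (P + t • E))ᵀ) i j)
        ((Zs * (P⁻¹ * E * P⁻¹)ᵀ) i j) 0 := by
      have heq : (fun t : ℝ => (Z - Zs * (Ring.inverse (P + t • E))ᵀ) i j)
          = fun t : ℝ => Z i j - ∑ k, Zs i k * Ring.inverse (P + t • E) j k := by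
        funext t
        simp [Matrix.sub_apply, Matrix.mul_apply, Matrix.transpose_apply]
      rw [heq]
      have hsum : HasDerivAt (fun t : ℝ => ∑ k, Zs i k * Ring.inverse (P + t • E) j k)
          (∑ k, Zs i k * (-(P⁻¹ * E * P⁻¹)) j k) 0 :=
        HasDerivAt.fun_sum fun k _ => (hcent j k).const_mul (Zs i k)
      have h := hsum.const_sub (Z i j)
      refine h.congr_deriv ?_
      simp only [Matrix.mul_apply, Matrix.transpose_apply, Matrix.neg_apply, mul_neg,
        Finset.sum_neg_distrib, neg_neg]
    have h := hasDerivAt_normSq hf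
    have h00 : (Z - Zs * (Ring.inverse (P + (0:ℝ) • E))ᵀ) i j = (Z - Zs * (P⁻¹)ᵀ) i j := by
      simp [← Matrix.nonsing_inv_eq_ringInverse]
    rw [h00] at h
    exact h
  -- total derivative
  have hsum1 : HasDerivAt
      (fun t : ℝ => ∑ i, ∑ j, Complex.normSq ((Z - Zs * (P + t • E)) i j))
      (-(∑ i, ∑ j, 2 * ((starRingEnd ℂ) ((Z - Zs * P) i j) * ((Zs * E) i j)).re)) 0 := by
    have := HasDerivAt.fun_sum (fun i (_ : i ∈ Finset.univ) =>
      HasDerivAt.fun_sum (fun j (_ : j ∈ Finset.univ) => h1 i j))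
    simpa [Finset.sum_neg_distrib] using this
  have hsum2 : HasDerivAt
      (fun t : ℝ => ∑ i, ∑ j, Complex.normSq ((Z - Zs * (Ring.inverse (P + t • E))ᵀ) i j))
      (∑ i, ∑ j, 2 * ((starRingEnd ℂ) ((Z - Zs * (P⁻¹)ᵀ) i j)
          * ((Zs * (P⁻¹ * E * P⁻¹)ᵀ) i j)).re) 0 :=
    HasDerivAt.fun_sum (fun i (_ : i ∈ Finset.univ) =>
      HasDerivAt.fun_sum (fun j (_ : j ∈ Finset.univ) => h2 i j))
  have htot := hsum1.add hsum2
  -- local minimum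
  have hcont : Continuous fun t : ℝ => P + t • E :=
    continuous_const.add (continuous_id.smul continuous_const)
  have hev : ∀ᶠ t in nhds (0 : ℝ), IsUnit (P + t • E) :=
    hcont.continuousAt.eventually_mem (Units.isOpen.mem_nhds (by simpa using hP))
  have hloc : IsLocalMin
      (fun t : ℝ => (∑ i, ∑ j, Complex.normSq ((Z - Zs * (P + t • E)) i j))
        + ∑ i, ∑ j, Complex.normSq ((Z - Zs * (Ring.inverse (P + t • E))ᵀ) i j)) 0 := by
    filter_upwards [hev] with t ht
    have hm := hmin (P + t • E) ht
    have e0 : (∑ i, ∑ j, Complex.normSq ((Z - Zs * (P + (0:ℝ) • E)) i j))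
        + (∑ i, ∑ j, Complex.normSq ((Z - Zs * (Ring.inverse (P + (0:ℝ) • E))ᵀ) i j))
        = frobNorm (Z - Zs * P) ^ 2 + frobNorm (Z - Zs * (P⁻¹)ᵀ) ^ 2 := by
      simp [frobNorm_sq, ← Matrix.nonsing_inv_eq_ringInverse]
    have et : (∑ i, ∑ j, Complex.normSq ((Z - Zs * (P + t • E)) i j))
        + (∑ i, ∑ j, Complex.normSq ((Z - Zs * (Ring.inverse (P + t • E))ᵀ) i j))
        = frobNorm (Z - Zs * (P + t • E)) ^ 2 + frobNorm (Z - Zs * ((P + t • E)⁻¹)ᵀ) ^ 2 := by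
      simp [frobNorm_sq, ← Matrix.nonsing_inv_eq_ringInverse]
    simp only [e0, et]
    exact hm
  have hzero := hloc.hasDerivAt_eq_zero htot
  linarith [hzero]

end Main

section Main2

attribute [local instance] Matrix.linftyOpNormedRing Matrix.linftyOpNormedAlgebra

variable {ns r : ℕ}

private lemma re_conj_I (c d : ℂ) : (c * (Complex.I * d)).re = -((c * d).im) := by
  simp [Complex.mul_re, Complex.mul_im]
  ring

private lemma stationarity
    (Z Zs : Matrix (Fin ns) (Fin r) ℂ)
    (P : Matrix (Fin r) (Fin r) ℂ) (hP : IsUnit P)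
    (hmin : ∀ P' : Matrix (Fin r) (Fin r) ℂ, IsUnit P' →
      frobNorm (Z - Zs * P) ^ 2 + frobNorm (Z - Zs * (P⁻¹)ᵀ) ^ 2
        ≤ frobNorm (Z - Zs * P') ^ 2 + frobNorm (Z - Zs * (P'⁻¹)ᵀ) ^ 2)
    (E : Matrix (Fin r) (Fin r) ℂ) :
    (∑ i, ∑ j, (starRingEnd ℂ) ((Z - Zs * P) i j) * (Zs * E) i j)
      = ∑ i, ∑ j, (starRingEnd ℂ) ((Z - Zs * (P⁻¹)ᵀ) i j)
          * (Zs * (P⁻¹ * E * P⁻¹)ᵀ) i j := by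
  have h1 := stationarity_re Z Zs P hP hmin E
  have h2 := stationarity_re Z Zs P hP hmin (Complex.I • E)
  have e1 : Zs * (Complex.I • E) = Complex.I • (Zs * E) := Matrix.mul_smul _ _ _
  have e2 : (P⁻¹ * (Complex.I • E) * P⁻¹)ᵀ = Complex.I • (P⁻¹ * E * P⁻¹)ᵀ := by
    rw [Matrix.mul_smul, Matrix.smul_mul, Matrix.transpose_smul]
  rw [e1, e2, Matrix.mul_smul] at h2
  simp only [Matrix.smul_apply, smul_eq_mul, re_conj_I, mul_neg,
    Finset.sum_neg_distrib, neg_inj] at h2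
  simp only [← Finset.mul_sum] at h1 h2
  have h1' := mul_left_cancel₀ (two_ne_zero (α := ℝ)) h1
  have h2' := mul_left_cancel₀ (two_ne_zero (α := ℝ)) h2
  apply Complex.ext
  · simpa [Complex.re_sum] using h1'
  · simpa [Complex.im_sum] using h2'

end Main2

section Final

variable {ns r : ℕ}

private lemma conjM_mul {m n p : ℕ} (A : Matrix (Fin m) (Fin n) ℂ)
    (B : Matrix (Fin n) (Fin p) ℂ) : conjM (A * B) = conjM A * conjM B := by
  simp [conjM, Matrix.map_mul]

private lemma conjM_transpose {m n : ℕ} (A : Matrix (Fin m) (Fin n) ℂ) :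
    conjM (Aᵀ) = Aᴴ := by
  ext i j; simp [conjM, Matrix.conjTranspose_apply]

private lemma conjTranspose_conjM {m n : ℕ} (A : Matrix (Fin m) (Fin n) ℂ) :
    (conjM A)ᴴ = Aᵀ := by
  ext i j; simp [conjM, Matrix.conjTranspose_apply]

private lemma transpose_conjTranspose' {m n : ℕ} (A : Matrix (Fin m) (Fin n) ℂ) :
    (Aᴴ)ᵀ = conjM A := by
  ext i j; simp [conjM, Matrix.conjTranspose_apply]

private lemma conjTranspose_transpose' {m n : ℕ} (A : Matrix (Fin m) (Fin n) ℂ) :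
    (Aᵀ)ᴴ = conjM A := by
  ext i j; simp [conjM, Matrix.conjTranspose_apply]

/-- First-order optimality condition for the alignment distance: if an invertible
`P` minimizes `‖Z − Z⋆P′‖_F² + ‖Z − Z⋆(P′)^{−T}‖_F²` over invertible `P′`, then
`(Z⋆P)ᴴ(Z − Z⋆P) = (Z − Z⋆P^{−T})ᵀ · conj(Z⋆P^{−T})`. -/
theorem alignment_first_order_optimality (ns r : ℕ)
    (Z Zs : Matrix (Fin ns) (Fin r) ℂ)
    (P : Matrix (Fin r) (Fin r) ℂ) (hP : IsUnit P)
    (hmin : ∀ P' : Matrix (Fin r) (Fin r) ℂ, IsUnit P' →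
      frobNorm (Z - Zs * P) ^ 2 + frobNorm (Z - Zs * (P⁻¹)ᵀ) ^ 2
        ≤ frobNorm (Z - Zs * P') ^ 2 + frobNorm (Z - Zs * (P'⁻¹)ᵀ) ^ 2) :
    (Zs * P)ᴴ * (Z - Zs * P)
      = (Z - Zs * (P⁻¹)ᵀ)ᵀ * conjM (Zs * (P⁻¹)ᵀ) := by
  have hstat := stationarity Z Zs P hP hmin
  have hPd : IsUnit P.det := (Matrix.isUnit_iff_isUnit_det P).mp hP
  have htr : ∀ E : Matrix (Fin r) (Fin r) ℂ,
      Matrix.trace (E * ((Z - Zs * P)ᴴ * Zs))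
        = Matrix.trace (E * (P⁻¹ * (Zsᵀ * conjM (Z - Zs * (P⁻¹)ᵀ)) * P⁻¹)) := by
    intro E
    have h := hstat E
    rw [← trace_form, ← trace_form] at h
    calc Matrix.trace (E * ((Z - Zs * P)ᴴ * Zs))
        = Matrix.trace ((Z - Zs * P)ᴴ * Zs * E) := Matrix.trace_mul_comm _ _
      _ = Matrix.trace ((Z - Zs * P)ᴴ * (Zs * E)) := by rw [Matrix.mul_assoc]
      _ = Matrix.trace ((Z - Zs * (P⁻¹)ᵀ)ᴴ * (Zs * (P⁻¹ * E * P⁻¹)ᵀ)) := h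
      _ = Matrix.trace (((Z - Zs * (P⁻¹)ᵀ)ᴴ * (Zs * (P⁻¹ * E * P⁻¹)ᵀ))ᵀ) :=
          (Matrix.trace_transpose _).symm
      _ = Matrix.trace ((P⁻¹ * E * P⁻¹) * (Zsᵀ * conjM (Z - Zs * (P⁻¹)ᵀ))) := by
          rw [Matrix.transpose_mul, Matrix.transpose_mul, Matrix.transpose_transpose,
            transpose_conjTranspose', Matrix.mul_assoc]
      _ = Matrix.trace (E * (P⁻¹ * (Zsᵀ * conjM (Z - Zs * (P⁻¹)ᵀ)) * P⁻¹)) := by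
          simp only [Matrix.mul_assoc]
          rw [Matrix.trace_mul_comm P⁻¹ (E * (P⁻¹ * (Zsᵀ * conjM (Z - Zs * (P⁻¹)ᵀ))))]
          simp only [Matrix.mul_assoc]
  have hAB : (Z - Zs * P)ᴴ * Zs
      = P⁻¹ * (Zsᵀ * conjM (Z - Zs * (P⁻¹)ᵀ)) * P⁻¹ := by
    ext p q
    have h := htr (Matrix.single q p 1)
    rwa [trace_stdBasisMatrix_mul, trace_stdBasisMatrix_mul] at h
  have hAB' := congrArg Matrix.conjTranspose hAB
  simp only [Matrix.conjTranspose_mul, Matrix.conjTranspose_conjTranspose] at hAB'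
  rw [conjTranspose_conjM, conjTranspose_transpose'] at hAB'
  -- hAB' : Zsᴴ * (Z - Zs * P) = (P⁻¹)ᴴ * ((Z - Zs * (P⁻¹)ᵀ)ᵀ * Zsᴴᴴ ...)
  rw [Matrix.conjTranspose_mul, Matrix.mul_assoc, hAB']
  rw [conjM_mul, conjM_transpose]
  rw [← Matrix.mul_assoc, ← Matrix.mul_assoc, ← Matrix.conjTranspose_mul,
    Matrix.nonsing_inv_mul P hPd, Matrix.conjTranspose_one, one_mul]
  rw [Matrix.mul_assoc]

end Final
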